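/- Let A = (n states, Σ, M, α, η) be a multiplicity word automaton over ℚ. Then ⟦A⟧(w) = 0 for every word w ∈ Σ* if and only if ⟦A⟧(w) = 0 for every word w ∈ Σ* of length at most n − 1 (equivalently, of length < n). -/
import Mathlib


open Matrix

/-- The value assigned by the multiplicity word automaton `(α, M, η)` to a word
`w ∈ Σ*`: `αᵀ ⋅ M(a₁)⋯M(a_t) ⋅ η`. -/
def mwaValue {Sig : Type*} {n : ℕ} (α η : Fin n → ℚ)
    (M : Sig → Matrix (Fin n) (Fin n) ℚ) (w : List Sig) : ℚ :=
  α ⬝ᵥ ((w.map M).prod).mulVec η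

namespace MwaAux

variable {Sig : Type*} {n : ℕ} (α : Fin n → ℚ) (M : Sig → Matrix (Fin n) (Fin n) ℚ)

/-- The row vector reached by reading `w`. -/
def rv (w : List Sig) : Fin n → ℚ := Matrix.vecMul α ((w.map M).prod)

/-- Span of the row vectors reachable by words of length at most `k`. -/
def V (k : ℕ) : Submodule ℚ (Fin n → ℚ) :=
  Submodule.span ℚ {v | ∃ w : List Sig, w.length ≤ k ∧ v = rv α M w}

lemma rv_mem (w : List Sig) : rv α M w ∈ V α M w.length :=
  Submodule.subset_span ⟨w, le_refl _, rfl⟩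

lemma V_mono : Monotone (V α M) := by
  intro i j hij
  apply Submodule.span_mono
  rintro v ⟨w, hw, rfl⟩
  exact ⟨w, hw.trans hij, rfl⟩

lemma rv_append (w : List Sig) (a : Sig) :
    rv α M (w ++ [a]) = Matrix.vecMul (rv α M w) (M a) := by
  simp [rv, Matrix.vecMul_vecMul]

lemma map_le (k : ℕ) (a : Sig) :
    Submodule.map ((M a).vecMulLinear) (V α M k) ≤ V α M (k + 1) := by
  rw [V, Submodule.map_span, Submodule.span_le]
  rintro v ⟨u, ⟨w, hw, rfl⟩, rfl⟩
  apply Submodule.subset_span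
  refine ⟨w ++ [a], by simpa using Nat.succ_le_succ hw, ?_⟩
  simp [rv_append]

lemma step (k : ℕ) (h : V α M (k + 1) ≤ V α M k) :
    V α M (k + 2) ≤ V α M (k + 1) := by
  rw [V, Submodule.span_le]
  rintro v ⟨w, hw, rfl⟩
  rcases Nat.lt_or_ge w.length (k + 2) with hl | hl
  · exact V_mono α M (by omega : w.length ≤ k + 1) (rv_mem α M w)
  · have hne : w ≠ [] := by
      intro h0; rw [h0] at hl; simp at hl
    obtain ⟨w', a, rfl⟩ : ∃ w' a, w = w' ++ [a] :=
      ⟨w.dropLast, w.getLast hne, (w.dropLast_append_getLast hne).symm⟩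
    have hw' : w'.length ≤ k + 1 := by simpa using hw
    have hmem : rv α M w' ∈ V α M k := h (V_mono α M hw' (rv_mem α M w'))
    rw [rv_append]
    exact map_le α M k a ⟨_, hmem, by simp⟩

lemma chain (k : ℕ) (h : V α M (k + 1) ≤ V α M k) :
    ∀ j, V α M (k + j) ≤ V α M k := by
  have hs : ∀ j, V α M (k + j + 1) ≤ V α M (k + j) := by
    intro j
    induction j with
    | zero => exact h
    | succ j ih => exact step α M (k + j) ih
  intro j
  induction j with
  | zero => exact le_refl _
  | succ j ih => exact le_trans (by simpa [Nat.add_assoc] using hs j) ih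

lemma all_le (k : ℕ) (h : V α M (k + 1) ≤ V α M k) (m : ℕ) : V α M m ≤ V α M k := by
  rcases le_or_gt m k with hm | hm
  · exact V_mono α M hm
  · have : m = k + (m - k) := by omega
    rw [this]
    exact chain α M k h _

end MwaAux

open MwaAux in
/-- A multiplicity word automaton with `n` states recognises the zero
series iff it assigns `0` to every word of length `< n` (i.e. of length at most `n - 1`). -/
theorem mwa_zero_iff_zero_on_short_words
    {Sig : Type*} [Fintype Sig] {n : ℕ} (α η : Fin n → ℚ)
    (M : Sig → Matrix (Fin n) (Fin n) ℚ) :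
    (∀ w : List Sig, mwaValue α η M w = 0) ↔
      (∀ w : List Sig, w.length < n → mwaValue α η M w = 0) := by
  constructor
  · intro h w _; exact h w
  · intro h w
    -- trivial cases
    rcases Nat.eq_zero_or_pos n with hn | hn
    · subst hn
      simp [mwaValue, dotProduct]
    by_cases hα : α = 0
    · simp [mwaValue, hα]
    -- value via row vectors
    have hval : ∀ u : List Sig, mwaValue α η M u = rv α M u ⬝ᵥ η := by
      intro u; rw [mwaValue, dotProduct_mulVec]; rfl
    -- find a stabilization point k < n
    have hex : ∃ k < n, V α M (k + 1) ≤ V α M k := by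
      by_contra hcon
      push_neg at hcon
      have hstrict : ∀ k < n, V α M k < V α M (k + 1) := fun k hk =>
        lt_of_le_of_ne (V_mono α M (Nat.le_succ k)) (fun he => hcon k hk he.ge)
      have hrank : ∀ k ≤ n, k + 1 ≤ Module.finrank ℚ (V α M k) := by
        intro k hk
        induction k with
        | zero =>
          have h0 : α ∈ V α M 0 := by
            have : rv α M ([] : List Sig) = α := by simp [rv]
            simpa [this] using rv_mem α M ([] : List Sig)
          rcases Nat.eq_zero_or_pos (Module.finrank ℚ (V α M 0)) with h0r | h0r
          · exfalso
            have : V α M 0 = ⊥ := Submodule.finrank_eq_zero.mp h0r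
            rw [this] at h0
            exact hα (Submodule.mem_bot ℚ |>.mp h0)
          · omega
        | succ k ih =>
          have hk' : k < n := by omega
          have := Submodule.finrank_lt_finrank_of_lt (hstrict k hk')
          have := ih (by omega)
          omega
      have h1 := hrank n le_rfl
      have h2 : Module.finrank ℚ (V α M n) ≤ n := by
        simpa using Submodule.finrank_le (V α M n)
      omega
    obtain ⟨k, hk, hstab⟩ := hex
    -- the functional x ↦ x ⬝ᵥ η vanishes on V k
    let φ : (Fin n → ℚ) →ₗ[ℚ] ℚ :=
      { toFun := fun x => x ⬝ᵥ η
        map_add' := fun x y => add_dotProduct x y η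
        map_smul' := fun c x => smul_dotProduct c x η }
    have hker : V α M k ≤ LinearMap.ker φ := by
      rw [V, Submodule.span_le]
      rintro v ⟨u, hu, rfl⟩
      have hu' : u.length < n := by omega
      have := h u hu'
      rw [hval u] at this
      simpa [φ, LinearMap.mem_ker] using this
    have hmem : rv α M w ∈ V α M k :=
      all_le α M k hstab w.length (rv_mem α M w)
    have := hker hmem
    rw [hval w]
    simpa [φ, LinearMap.mem_ker] using this
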